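/- Let A be the m×m downshift matrix with m ≥ 2. Then the relative Frobenius-norm distance from A to the set of Hermitian negative semidefinite matrices equals √3/2. -/

import Mathlib

open Matrix
open scoped ComplexOrder

/-- The `m × m` downshift matrix: ones on the subdiagonal, zeros elsewhere. -/
def downshift (m : ℕ) : Matrix (Fin m) (Fin m) ℂ :=
  Matrix.of fun i j => if (i : ℕ) = (j : ℕ) + 1 then 1 else 0

/-- The Frobenius norm of a matrix. -/
noncomputable def frob {m : ℕ} (M : Matrix (Fin m) (Fin m) ℂ) : ℝ :=
  Real.sqrt (∑ i, ∑ j, ‖M i j‖ ^ 2)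

namespace DownAux
variable {m : ℕ}

noncomputable def fsq (M : Matrix (Fin m) (Fin m) ℂ) : ℝ := ∑ i, ∑ j, ‖M i j‖ ^ 2

lemma frob_eq (M : Matrix (Fin m) (Fin m) ℂ) : frob M = Real.sqrt (fsq M) := rfl

lemma fsq_nonneg (M : Matrix (Fin m) (Fin m) ℂ) : 0 ≤ fsq M :=
  Finset.sum_nonneg fun _ _ => Finset.sum_nonneg fun _ _ => sq_nonneg _

lemma fsq_eq_re_trace (M : Matrix (Fin m) (Fin m) ℂ) :
    fsq M = Complex.re (Matrix.trace (Mᴴ * M)) := by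
  simp only [Matrix.trace, Matrix.diag, Matrix.mul_apply, Matrix.conjTranspose_apply,
    Complex.re_sum, fsq]
  rw [Finset.sum_comm]
  refine Finset.sum_congr rfl fun i _ => Finset.sum_congr rfl fun j _ => ?_
  rw [Complex.sq_norm, Complex.normSq_apply, Complex.mul_re]
  simp [Complex.normSq_apply]

lemma fsq_conj (V M : Matrix (Fin m) (Fin m) ℂ) (h1 : Vᴴ * V = 1) (h2 : V * Vᴴ = 1) :
    fsq (Vᴴ * M * V) = fsq M := by
  rw [fsq_eq_re_trace, fsq_eq_re_trace]
  congr 1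
  rw [Matrix.conjTranspose_mul, Matrix.conjTranspose_mul, Matrix.conjTranspose_conjTranspose]
  simp only [mul_assoc]
  rw [← mul_assoc V Vᴴ, h2, one_mul, Matrix.trace_mul_comm]
  simp only [mul_assoc]
  rw [h2, mul_one]

lemma fsq_add_of_orthog (X Y : Matrix (Fin m) (Fin m) ℂ)
    (hX : Xᴴ = X) (hY : Yᴴ = -Y) : fsq (X + Y) = fsq X + fsq Y := by
  have key : ∀ i j, ‖(X + Y) i j‖ ^ 2
      = ‖X i j‖ ^ 2 + ‖Y i j‖ ^ 2 + 2 * (X i j * (starRingEnd ℂ) (Y i j)).re := by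
    intro i j
    simp only [Matrix.add_apply, Complex.sq_norm]
    rw [Complex.normSq_add]
  have cross : (∑ i, ∑ j, (X i j * (starRingEnd ℂ) (Y i j)).re) = 0 := by
    have h : ∀ i j, (X i j * (starRingEnd ℂ) (Y i j)).re
        = -((X j i * (starRingEnd ℂ) (Y j i)).re) := by
      intro i j
      have hx : X i j = (starRingEnd ℂ) (X j i) := by
        conv_lhs => rw [← hX]
        rfl
      have hy : (starRingEnd ℂ) (Y i j) = - Y j i := by
        have := congrFun (congrFun hY j) i
        simp only [Matrix.conjTranspose_apply, Matrix.neg_apply] at this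
        rw [← this]
        simp
      rw [hx, hy]
      have : (starRingEnd ℂ) (X j i) * -Y j i
          = -((starRingEnd ℂ) (X j i * (starRingEnd ℂ) (Y j i))) := by
        simp [mul_comm]
      rw [this, Complex.neg_re, Complex.conj_re]
    have h2 : (∑ i, ∑ j, (X i j * (starRingEnd ℂ) (Y i j)).re)
        = -(∑ i, ∑ j, (X i j * (starRingEnd ℂ) (Y i j)).re) := by
      conv_lhs => rw [Finset.sum_comm]
      rw [← Finset.sum_neg_distrib]
      refine Finset.sum_congr rfl fun a _ => ?_
      rw [← Finset.sum_neg_distrib]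
      refine Finset.sum_congr rfl fun b _ => ?_
      exact h b a
    linarith
  simp only [fsq, key]
  calc (∑ i, ∑ j, (‖X i j‖ ^ 2 + ‖Y i j‖ ^ 2 + 2 * (X i j * (starRingEnd ℂ) (Y i j)).re))
      = (∑ i, ∑ j, ‖X i j‖ ^ 2) + (∑ i, ∑ j, ‖Y i j‖ ^ 2)
        + 2 * (∑ i, ∑ j, (X i j * (starRingEnd ℂ) (Y i j)).re) := by
        simp only [Finset.sum_add_distrib, Finset.mul_sum]
    _ = (∑ i, ∑ j, ‖X i j‖ ^ 2) + (∑ i, ∑ j, ‖Y i j‖ ^ 2) := by rw [cross]; ring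

lemma sum_ind (i : Fin m) (c : ℝ) :
    (∑ j : Fin m, if (i : ℕ) = (j : ℕ) + 1 then c else 0)
      = if 1 ≤ (i : ℕ) then c else 0 := by
  rcases Nat.eq_zero_or_pos (i : ℕ) with h | h
  · rw [if_neg (by omega)]
    exact Finset.sum_eq_zero fun j _ => by rw [if_neg (by omega)]
  · rw [if_pos (by omega : 1 ≤ (i : ℕ)), Finset.sum_eq_single (⟨(i : ℕ) - 1, by omega⟩ : Fin m)]
    · rw [if_pos (by simp; omega)]
    · intro j _ hj
      rw [if_neg]
      intro hc
      exact hj (Fin.ext (by simp; omega))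
    · simp

lemma sum_sum_ind (hm : 1 ≤ m) (c : ℝ) :
    (∑ i : Fin m, ∑ j : Fin m, if (i : ℕ) = (j : ℕ) + 1 then c else 0)
      = ((m : ℝ) - 1) * c := by
  simp only [sum_ind]
  rw [Fin.sum_univ_eq_sum_range (fun k => if 1 ≤ k then c else 0) m]
  obtain ⟨n, rfl⟩ : ∃ n, m = n + 1 := ⟨m - 1, by omega⟩
  rw [Finset.sum_range_succ']
  simp [mul_comm]

lemma sum_sum_ind' (hm : 1 ≤ m) (c : ℝ) :
    (∑ i : Fin m, ∑ j : Fin m, if (j : ℕ) = (i : ℕ) + 1 then c else 0)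
      = ((m : ℝ) - 1) * c := by
  rw [Finset.sum_comm]
  exact sum_sum_ind hm c

lemma fsq_downshift (hm : 1 ≤ m) : fsq (downshift m) = (m : ℝ) - 1 := by
  have : ∀ i j : Fin m, ‖downshift m i j‖ ^ 2
      = if (i : ℕ) = (j : ℕ) + 1 then (1 : ℝ) else 0 := by
    intro i j
    by_cases h : (i : ℕ) = (j : ℕ) + 1 <;> simp [downshift, h]
  simp only [fsq, this]
  rw [sum_sum_ind hm, mul_one]

/-- charpoly is invariant under conjugation. -/
lemma charpoly_conj (P M Q : Matrix (Fin m) (Fin m) ℂ) (h1 : P * Q = 1) (h2 : Q * P = 1) :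
    (P * M * Q).charpoly = M.charpoly := by
  unfold Matrix.charpoly
  have key : (P * M * Q).charmatrix = P.map Polynomial.C * M.charmatrix * Q.map Polynomial.C := by
    rw [Matrix.charmatrix, Matrix.charmatrix]
    simp only [RingHom.mapMatrix_apply]
    rw [Matrix.map_mul, Matrix.map_mul]
    rw [mul_sub, sub_mul]
    congr 1
    · rw [show (Matrix.scalar (Fin m)) (Polynomial.X (R := ℂ))
          = Polynomial.X • (1 : Matrix (Fin m) (Fin m) (Polynomial ℂ)) by
        rw [Matrix.smul_one_eq_diagonal]; rfl]
      rw [Matrix.mul_smul, Matrix.smul_mul, mul_one]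
      rw [← Matrix.map_mul, h1]
      simp
  rw [key, Matrix.det_mul, Matrix.det_mul]
  have : P.map Polynomial.C * Q.map Polynomial.C = 1 := by rw [← Matrix.map_mul, h1]; simp
  have hdet : (P.map Polynomial.C).det * (Q.map Polynomial.C).det = 1 := by
    rw [← Matrix.det_mul, this, Matrix.det_one]
  calc (P.map Polynomial.C).det * M.charmatrix.det * (Q.map Polynomial.C).det
      = (P.map Polynomial.C).det * (Q.map Polynomial.C).det * M.charmatrix.det := by ring
    _ = M.charmatrix.det := by rw [hdet, one_mul]

lemma charpoly_diagonal (d : Fin m → ℂ) :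
    (Matrix.diagonal d).charpoly = ∏ i : Fin m, (Polynomial.X - Polynomial.C (d i)) := by
  rw [Matrix.charpoly_of_upperTriangular _ (Matrix.blockTriangular_diagonal d)]
  simp

lemma roots_prod_X_sub_C' (f : Fin m → ℂ) :
    (∏ i : Fin m, (Polynomial.X - Polynomial.C (f i))).roots
      = Finset.univ.val.map f := by
  have : (∏ i : Fin m, (Polynomial.X - Polynomial.C (f i)))
      = ((Finset.univ.val.map f).map (fun a => Polynomial.X - Polynomial.C a)).prod := by
    rw [Finset.prod, Multiset.map_map]
    rfl
  rw [this, Polynomial.roots_multiset_prod_X_sub_C]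


lemma fsq_diagonal (d : Fin m → ℂ) : fsq (Matrix.diagonal d) = ∑ i, ‖d i‖ ^ 2 := by
  have key : ∀ i j : Fin m, ‖Matrix.diagonal d i j‖ ^ 2 = if j = i then ‖d i‖ ^ 2 else 0 := by
    intro i j
    by_cases h : j = i
    · subst h; simp [Matrix.diagonal_apply_eq]
    · rw [if_neg h, Matrix.diagonal_apply_ne d (fun hc => h hc.symm)]
      simp
  simp only [fsq, key]
  simp

lemma diag_le_fsq (M : Matrix (Fin m) (Fin m) ℂ) : (∑ i, ‖M i i‖ ^ 2) ≤ fsq M := by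
  refine Finset.sum_le_sum fun i _ => ?_
  exact Finset.single_le_sum (f := fun j => ‖M i j‖ ^ 2) (fun j _ => sq_nonneg _)
    (Finset.mem_univ i)

lemma diag_nonneg_of_psd (M : Matrix (Fin m) (Fin m) ℂ) (h : M.PosSemidef) (i : Fin m) :
    0 ≤ M i i := by
  exact h.diag_nonneg

/-- The Hermitian part of the downshift matrix. -/
noncomputable def Bm (m : ℕ) : Matrix (Fin m) (Fin m) ℂ :=
  (2⁻¹ : ℂ) • (downshift m + (downshift m)ᴴ)

/-- The anti-Hermitian part of the downshift matrix. -/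
noncomputable def Cm (m : ℕ) : Matrix (Fin m) (Fin m) ℂ :=
  (2⁻¹ : ℂ) • (downshift m - (downshift m)ᴴ)

lemma B_add_C : Bm m + Cm m = downshift m := by
  rw [Bm, Cm, ← smul_add]
  have : downshift m + (downshift m)ᴴ + (downshift m - (downshift m)ᴴ)
      = (2 : ℂ) • downshift m := by
    rw [two_smul]; abel
  rw [this, smul_smul]
  norm_num

lemma hB_herm : (Bm m).IsHermitian := by
  rw [Matrix.IsHermitian, Bm, Matrix.conjTranspose_smul, Matrix.conjTranspose_add,
    Matrix.conjTranspose_conjTranspose]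
  rw [show (star (2⁻¹ : ℂ)) = (2⁻¹ : ℂ) by simp]
  rw [add_comm]

lemma hC_anti : (Cm m)ᴴ = -(Cm m) := by
  rw [Cm, Matrix.conjTranspose_smul, Matrix.conjTranspose_sub,
    Matrix.conjTranspose_conjTranspose]
  rw [show (star (2⁻¹ : ℂ)) = (2⁻¹ : ℂ) by simp]
  rw [← smul_neg, neg_sub]

lemma down_apply (i j : Fin m) :
    downshift m i j = if (i : ℕ) = (j : ℕ) + 1 then 1 else 0 := rfl

lemma downH_apply (i j : Fin m) :
    (downshift m)ᴴ i j = if (j : ℕ) = (i : ℕ) + 1 then 1 else 0 := by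
  rw [Matrix.conjTranspose_apply, down_apply]
  by_cases h : (j : ℕ) = (i : ℕ) + 1 <;> simp [h]

lemma fsq_B (hm : 1 ≤ m) : fsq (Bm m) = ((m : ℝ) - 1) / 2 := by
  have key : ∀ i j : Fin m, ‖Bm m i j‖ ^ 2
      = (if (i : ℕ) = (j : ℕ) + 1 then (1/4 : ℝ) else 0)
        + (if (j : ℕ) = (i : ℕ) + 1 then (1/4 : ℝ) else 0) := by
    intro i j
    rw [Bm, Matrix.smul_apply, Matrix.add_apply, down_apply, downH_apply]
    by_cases h1 : (i : ℕ) = (j : ℕ) + 1 <;> by_cases h2 : (j : ℕ) = (i : ℕ) + 1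
    · omega
    · rw [if_pos h1, if_neg h2, if_pos h1, if_neg h2]; norm_num
    · rw [if_neg h1, if_pos h2, if_neg h1, if_pos h2]; norm_num
    · rw [if_neg h1, if_neg h2, if_neg h1, if_neg h2]; norm_num
  simp only [fsq, key]
  calc (∑ i : Fin m, ∑ j : Fin m, ((if (i : ℕ) = (j : ℕ) + 1 then (1/4 : ℝ) else 0)
        + (if (j : ℕ) = (i : ℕ) + 1 then (1/4 : ℝ) else 0)))
      = (∑ i : Fin m, ∑ j : Fin m, if (i : ℕ) = (j : ℕ) + 1 then (1/4 : ℝ) else 0)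
        + (∑ i : Fin m, ∑ j : Fin m, if (j : ℕ) = (i : ℕ) + 1 then (1/4 : ℝ) else 0) := by
        simp only [Finset.sum_add_distrib]
    _ = ((m : ℝ) - 1) * (1/4) + ((m : ℝ) - 1) * (1/4) := by
        rw [sum_sum_ind hm, sum_sum_ind' hm]
    _ = ((m : ℝ) - 1) / 2 := by ring

lemma fsq_C (hm : 1 ≤ m) : fsq (Cm m) = ((m : ℝ) - 1) / 2 := by
  have key : ∀ i j : Fin m, ‖Cm m i j‖ ^ 2
      = (if (i : ℕ) = (j : ℕ) + 1 then (1/4 : ℝ) else 0)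
        + (if (j : ℕ) = (i : ℕ) + 1 then (1/4 : ℝ) else 0) := by
    intro i j
    rw [Cm, Matrix.smul_apply, Matrix.sub_apply, down_apply, downH_apply]
    by_cases h1 : (i : ℕ) = (j : ℕ) + 1 <;> by_cases h2 : (j : ℕ) = (i : ℕ) + 1
    · omega
    · rw [if_pos h1, if_neg h2, if_pos h1, if_neg h2]; norm_num
    · rw [if_neg h1, if_pos h2, if_neg h1, if_pos h2]; norm_num
    · rw [if_neg h1, if_neg h2, if_neg h1, if_neg h2]; norm_num
  simp only [fsq, key]
  calc (∑ i : Fin m, ∑ j : Fin m, ((if (i : ℕ) = (j : ℕ) + 1 then (1/4 : ℝ) else 0)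
        + (if (j : ℕ) = (i : ℕ) + 1 then (1/4 : ℝ) else 0)))
      = (∑ i : Fin m, ∑ j : Fin m, if (i : ℕ) = (j : ℕ) + 1 then (1/4 : ℝ) else 0)
        + (∑ i : Fin m, ∑ j : Fin m, if (j : ℕ) = (i : ℕ) + 1 then (1/4 : ℝ) else 0) := by
        simp only [Finset.sum_add_distrib]
    _ = ((m : ℝ) - 1) * (1/4) + ((m : ℝ) - 1) * (1/4) := by
        rw [sum_sum_ind hm, sum_sum_ind' hm]
    _ = ((m : ℝ) - 1) / 2 := by ring

/-- The sign matrix. -/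
def Sm (m : ℕ) : Matrix (Fin m) (Fin m) ℂ :=
  Matrix.diagonal (fun i : Fin m => (-1 : ℂ) ^ (i : ℕ))

lemma S_mul_S : Sm m * Sm m = 1 := by
  rw [Sm, Matrix.diagonal_mul_diagonal]
  rw [show (fun i : Fin m => (-1 : ℂ) ^ (i : ℕ) * (-1 : ℂ) ^ (i : ℕ)) = fun _ => 1 from
    funext fun i => by rw [← pow_add]; exact Even.neg_one_pow ⟨(i : ℕ), rfl⟩]
  exact Matrix.diagonal_one

lemma S_conj : Sm m * Bm m * Sm m = -(Bm m) := by
  ext i j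
  rw [Sm, Matrix.mul_diagonal, Matrix.diagonal_mul, Matrix.neg_apply]
  have hz : (-1 : ℂ) ^ (i : ℕ) * Bm m i j * (-1 : ℂ) ^ (j : ℕ)
      = (-1 : ℂ) ^ ((i : ℕ) + (j : ℕ)) * Bm m i j := by
    rw [pow_add]; ring
  rw [hz]
  by_cases h1 : (i : ℕ) = (j : ℕ) + 1
  · rw [Odd.neg_one_pow ⟨(j : ℕ), by omega⟩]; ring
  · by_cases h2 : (j : ℕ) = (i : ℕ) + 1
    · rw [Odd.neg_one_pow ⟨(i : ℕ), by omega⟩]; ring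
    · have hB0 : Bm m i j = 0 := by
        rw [Bm, Matrix.smul_apply, Matrix.add_apply, down_apply, downH_apply,
          if_neg h1, if_neg h2]
        simp
      rw [hB0]; ring

section Eigen
variable (m : ℕ)

noncomputable def mu (m : ℕ) : Fin m → ℝ := (hB_herm (m := m)).eigenvalues

noncomputable def Um (m : ℕ) : Matrix (Fin m) (Fin m) ℂ :=
  ((hB_herm (m := m)).eigenvectorUnitary : Matrix (Fin m) (Fin m) ℂ)

lemma U_unit1 : (Um m)ᴴ * Um m = 1 := by
  rw [← Matrix.star_eq_conjTranspose]
  exact Matrix.mem_unitaryGroup_iff'.mp ((hB_herm (m := m)).eigenvectorUnitary).2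

lemma U_unit2 : Um m * (Um m)ᴴ = 1 := by
  rw [← Matrix.star_eq_conjTranspose]
  exact Matrix.mem_unitaryGroup_iff.mp ((hB_herm (m := m)).eigenvectorUnitary).2

lemma spectral : (Um m)ᴴ * Bm m * Um m = Matrix.diagonal (fun i => ((mu m i : ℝ) : ℂ)) := by
  rw [← Matrix.star_eq_conjTranspose]
  have := (hB_herm (m := m)).conjStarAlgAut_star_eigenvectorUnitary
  rw [Unitary.conjStarAlgAut_star_apply] at this
  exact this

lemma spectral' : Bm m = Um m * Matrix.diagonal (fun i => ((mu m i : ℝ) : ℂ)) * (Um m)ᴴ := by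
  conv_lhs => rw [(hB_herm (m := m)).spectral_theorem]
  rw [← Matrix.star_eq_conjTranspose]
  rfl

lemma eig_symm :
    (Finset.univ.val.map (mu m)) = Finset.univ.val.map (fun i => -(mu m i)) := by
  have c1 : (Bm m).charpoly
      = ∏ i : Fin m, (Polynomial.X - Polynomial.C ((mu m i : ℝ) : ℂ)) := by
    conv_lhs => rw [spectral' m]
    rw [charpoly_conj _ _ _ (U_unit2 m) (U_unit1 m), charpoly_diagonal]
  have c2 : (-(Bm m)).charpoly
      = ∏ i : Fin m, (Polynomial.X - Polynomial.C (-((mu m i : ℝ) : ℂ))) := by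
    have : -(Bm m) = Um m * Matrix.diagonal (fun i => -((mu m i : ℝ) : ℂ)) * (Um m)ᴴ := by
      conv_lhs => rw [spectral' m]
      rw [← Matrix.diagonal_neg, Matrix.mul_neg, Matrix.neg_mul]
    rw [this, charpoly_conj _ _ _ (U_unit2 m) (U_unit1 m), charpoly_diagonal]
  have c3 : (-(Bm m)).charpoly = (Bm m).charpoly := by
    rw [← S_conj]
    exact charpoly_conj _ _ _ S_mul_S S_mul_S
  have hroots : Finset.univ.val.map (fun i => ((mu m i : ℝ) : ℂ))
      = Finset.univ.val.map (fun i => -((mu m i : ℝ) : ℂ)) := by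
    rw [← roots_prod_X_sub_C' (fun i => ((mu m i : ℝ) : ℂ)),
      ← roots_prod_X_sub_C' (fun i => -((mu m i : ℝ) : ℂ)), ← c1, ← c2, c3]
  have h1 : (fun i : Fin m => ((mu m i : ℝ) : ℂ)) = Complex.ofReal ∘ mu m := rfl
  have h2 : (fun i : Fin m => -((mu m i : ℝ) : ℂ))
      = Complex.ofReal ∘ (fun i => -(mu m i)) := by
    funext i; simp
  rw [h1, h2, ← Multiset.map_map, ← Multiset.map_map] at hroots
  exact Multiset.map_injective Complex.ofReal_injective hroots

lemma sum_symm (g : ℝ → ℝ) : (∑ i, g (mu m i)) = ∑ i, g (-(mu m i)) := by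
  have h := congrArg (fun s : Multiset ℝ => (s.map g).sum) (eig_symm m)
  simpa [Finset.sum, Multiset.map_map, Function.comp_def] using h

lemma sum_sq_eig (hm : 1 ≤ m) : (∑ i, (mu m i) ^ 2) = ((m : ℝ) - 1) / 2 := by
  have e1 : (∑ i, (mu m i) ^ 2) = ∑ i, ‖((mu m i : ℝ) : ℂ)‖ ^ 2 := by
    refine Finset.sum_congr rfl fun i _ => ?_
    rw [Complex.norm_real, Real.norm_eq_abs, sq_abs]
  rw [e1, ← fsq_diagonal, ← spectral m, fsq_conj _ _ (U_unit1 m) (U_unit2 m), fsq_B hm]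

lemma p_eq (hm : 1 ≤ m) : (∑ i, (max (mu m i) 0) ^ 2) = ((m : ℝ) - 1) / 4 := by
  have h1 := sum_symm m (fun x => max x 0 ^ 2)
  have h2 : ∀ x : ℝ, max x 0 ^ 2 + max (-x) 0 ^ 2 = x ^ 2 := by
    intro x
    rcases le_total 0 x with h | h
    · rw [max_eq_left h, max_eq_right (neg_nonpos.2 h)]; ring
    · rw [max_eq_right h, max_eq_left (neg_nonneg.2 h)]; ring
  have h3 : (∑ i, max (mu m i) 0 ^ 2) + (∑ i, max (-(mu m i)) 0 ^ 2)
      = ∑ i, (mu m i) ^ 2 := by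
    rw [← Finset.sum_add_distrib]
    exact Finset.sum_congr rfl fun i _ => h2 _
  rw [sum_sq_eig m hm] at h3
  linarith

end Eigen


lemma lower_bound (m : ℕ) (hm : 1 ≤ m) (H : Matrix (Fin m) (Fin m) ℂ)
    (hH : (-H).PosSemidef) :
    3 * ((m : ℝ) - 1) / 4 ≤ fsq (downshift m - H) := by
  have hHh : Hᴴ = H := by
    have h := hH.1
    rw [Matrix.IsHermitian, Matrix.conjTranspose_neg] at h
    exact neg_injective h
  have hdecomp : downshift m - H = (Bm m - H) + Cm m := by
    rw [← B_add_C]; abel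
  have horth : fsq (downshift m - H) = fsq (Bm m - H) + fsq (Cm m) := by
    rw [hdecomp]
    refine fsq_add_of_orthog _ _ ?_ hC_anti
    rw [Matrix.conjTranspose_sub, hHh, hB_herm.eq]
  have hconj : fsq (Bm m - H)
      = fsq (Matrix.diagonal (fun i => ((mu m i : ℝ) : ℂ)) - (Um m)ᴴ * H * Um m) := by
    rw [← spectral m]
    rw [← fsq_conj (Um m) (Bm m - H) (U_unit1 m) (U_unit2 m)]
    congr 1
    rw [Matrix.mul_sub, Matrix.sub_mul]
  set K := (Um m)ᴴ * H * Um m with hK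
  have hKpsd : (-K).PosSemidef := by
    have := hH.conjTranspose_mul_mul_same (Um m)
    have e : (Um m)ᴴ * (-H) * Um m = -K := by
      rw [hK, Matrix.mul_neg, Matrix.neg_mul]
    rwa [e] at this
  have hKdiag : ∀ i, (K i i).re ≤ 0 := by
    intro i
    have h0 : 0 ≤ (-K) i i := diag_nonneg_of_psd _ hKpsd i
    have := Complex.nonneg_iff.mp h0 |>.1
    rw [Matrix.neg_apply, Complex.neg_re] at this
    linarith
  have hterm : ∀ i : Fin m, max (mu m i) 0 ^ 2
      ≤ ‖(Matrix.diagonal (fun k => ((mu m k : ℝ) : ℂ)) - K) i i‖ ^ 2 := by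
    intro i
    set z := (Matrix.diagonal (fun k => ((mu m k : ℝ) : ℂ)) - K) i i with hz
    have hre : z.re = mu m i - (K i i).re := by
      rw [hz, Matrix.sub_apply, Complex.sub_re, Matrix.diagonal_apply_eq, Complex.ofReal_re]
    have h1 : z.re ^ 2 ≤ ‖z‖ ^ 2 := by
      rw [Complex.sq_norm, Complex.normSq_apply]
      nlinarith [sq_nonneg z.im]
    have h2 : max (mu m i) 0 ^ 2 ≤ z.re ^ 2 := by
      rw [hre]
      rcases le_total 0 (mu m i) with h | h
      · rw [max_eq_left h]
        have := hKdiag i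
        nlinarith
      · rw [max_eq_right h]
        simpa using sq_nonneg (mu m i - (K i i).re)
    linarith
  have hge : ((m : ℝ) - 1) / 4 ≤ fsq (Bm m - H) := by
    rw [hconj]
    calc ((m : ℝ) - 1) / 4 = ∑ i, max (mu m i) 0 ^ 2 := (p_eq m hm).symm
      _ ≤ ∑ i, ‖(Matrix.diagonal (fun k => ((mu m k : ℝ) : ℂ)) - K) i i‖ ^ 2 :=
          Finset.sum_le_sum fun i _ => hterm i
      _ ≤ fsq (Matrix.diagonal (fun k => ((mu m k : ℝ) : ℂ)) - K) := diag_le_fsq _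
  rw [horth, fsq_C hm]
  linarith

lemma attained (m : ℕ) (hm : 1 ≤ m) :
    ∃ H : Matrix (Fin m) (Fin m) ℂ, (-H).PosSemidef ∧
      fsq (downshift m - H) = 3 * ((m : ℝ) - 1) / 4 := by
  refine ⟨Um m * Matrix.diagonal (fun i => ((min (mu m i) 0 : ℝ) : ℂ)) * (Um m)ᴴ, ?_, ?_⟩
  · have e : -(Um m * Matrix.diagonal (fun i => ((min (mu m i) 0 : ℝ) : ℂ)) * (Um m)ᴴ)
        = Um m * Matrix.diagonal (fun i => ((-min (mu m i) 0 : ℝ) : ℂ)) * (Um m)ᴴ := by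
      rw [show (fun i => ((-min (mu m i) 0 : ℝ) : ℂ))
          = fun i => -((min (mu m i) 0 : ℝ) : ℂ) from funext fun i => by push_cast; ring]
      rw [← Matrix.diagonal_neg, Matrix.mul_neg, Matrix.neg_mul]
    rw [e]
    refine Matrix.PosSemidef.mul_mul_conjTranspose_same ?_ (Um m)
    refine Matrix.posSemidef_diagonal_iff.mpr fun i => ?_
    rw [Complex.zero_le_real]
    simp [min_le_right]
  · set Hopt := Um m * Matrix.diagonal (fun i => ((min (mu m i) 0 : ℝ) : ℂ)) * (Um m)ᴴ with hHopt
    have hBH : Bm m - Hopt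
        = Um m * Matrix.diagonal (fun i => ((max (mu m i) 0 : ℝ) : ℂ)) * (Um m)ᴴ := by
      conv_lhs => rw [spectral' m, hHopt]
      rw [← Matrix.sub_mul, ← Matrix.mul_sub, Matrix.diagonal_sub]
      rw [show (fun i => ((mu m i : ℝ) : ℂ) - ((min (mu m i) 0 : ℝ) : ℂ))
          = (fun i => ((max (mu m i) 0 : ℝ) : ℂ)) from funext fun i => by
        rw [← Complex.ofReal_sub]
        exact Complex.ofReal_inj.mpr (by
          rcases le_total 0 (mu m i) with h | h
          · rw [min_eq_right h, max_eq_left h]; ring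
          · rw [min_eq_left h, max_eq_right h]; ring)]
    have hBHherm : (Bm m - Hopt)ᴴ = Bm m - Hopt := by
      rw [hBH]
      have hpsd : (Um m * Matrix.diagonal (fun i => ((max (mu m i) 0 : ℝ) : ℂ))
          * (Um m)ᴴ).PosSemidef := by
        refine Matrix.PosSemidef.mul_mul_conjTranspose_same ?_ (Um m)
        refine Matrix.posSemidef_diagonal_iff.mpr fun i => ?_
        rw [Complex.zero_le_real]
        exact le_max_right _ _
      exact hpsd.1
    have hdecomp : downshift m - Hopt = (Bm m - Hopt) + Cm m := by
      rw [← B_add_C]; abel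
    have horth : fsq (downshift m - Hopt) = fsq (Bm m - Hopt) + fsq (Cm m) := by
      rw [hdecomp]
      exact fsq_add_of_orthog _ _ hBHherm hC_anti
    have hfsqBH : fsq (Bm m - Hopt) = ((m : ℝ) - 1) / 4 := by
      rw [hBH]
      have e2 : Um m * Matrix.diagonal (fun i => ((max (mu m i) 0 : ℝ) : ℂ)) * (Um m)ᴴ
          = ((Um m)ᴴ)ᴴ * Matrix.diagonal (fun i => ((max (mu m i) 0 : ℝ) : ℂ)) * (Um m)ᴴ := by
        rw [Matrix.conjTranspose_conjTranspose]
      rw [e2, fsq_conj ((Um m)ᴴ) _ (by rw [Matrix.conjTranspose_conjTranspose]; exact U_unit2 m)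
        (by rw [Matrix.conjTranspose_conjTranspose]; exact U_unit1 m)]
      rw [fsq_diagonal]
      rw [← p_eq m hm]
      refine Finset.sum_congr rfl fun i _ => ?_
      rw [Complex.norm_real, Real.norm_eq_abs, sq_abs]
    rw [horth, hfsqBH, fsq_C hm]
    ring

end DownAux

/-- The relative Frobenius-norm distance from the downshift matrix to the set
of Hermitian negative semidefinite matrices equals `√3/2`, and it is attained. -/
theorem dist_downshift_negSemidef (m : ℕ) (hm : 2 ≤ m) :
    IsLeast {d : ℝ | ∃ H : Matrix (Fin m) (Fin m) ℂ, (-H).PosSemidef ∧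
      d = frob (downshift m - H) / frob (downshift m)} (Real.sqrt 3 / 2) := by
  have hm1 : 1 ≤ m := by omega
  set t : ℝ := (m : ℝ) - 1 with ht
  have htpos : 0 < t := by
    have h2 : (2 : ℝ) ≤ (m : ℝ) := by exact_mod_cast hm
    rw [ht]; linarith
  have hfrobA : frob (downshift m) = Real.sqrt t := by
    rw [DownAux.frob_eq, DownAux.fsq_downshift hm1]
  have h4 : Real.sqrt 4 = 2 := by
    rw [show (4 : ℝ) = 2 ^ 2 by norm_num, Real.sqrt_sq (by norm_num : (0:ℝ) ≤ 2)]
  have hsq : Real.sqrt (3 * t / 4) = Real.sqrt 3 / 2 * Real.sqrt t := by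
    rw [show 3 * t / 4 = (3 / 4) * t by ring, Real.sqrt_mul (by norm_num : (0:ℝ) ≤ 3/4)]
    congr 1
    rw [Real.sqrt_div (by norm_num : (0:ℝ) ≤ 3) 4, h4]
  have hsqt : Real.sqrt t ≠ 0 := ne_of_gt (Real.sqrt_pos.2 htpos)
  have hcancel : Real.sqrt 3 / 2 * Real.sqrt t / Real.sqrt t = Real.sqrt 3 / 2 := by
    rw [mul_div_assoc, div_self hsqt, mul_one]
  constructor
  · obtain ⟨H0, hpsd, hfsq⟩ := DownAux.attained m hm1
    refine ⟨H0, hpsd, ?_⟩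
    rw [DownAux.frob_eq, hfsq, hfrobA, ← ht, hsq, hcancel]
  · rintro d ⟨H, hpsd, rfl⟩
    rw [DownAux.frob_eq, hfrobA]
    have hlb := DownAux.lower_bound m hm1 H hpsd
    calc Real.sqrt 3 / 2 = Real.sqrt 3 / 2 * Real.sqrt t / Real.sqrt t := hcancel.symm
      _ = Real.sqrt (3 * t / 4) / Real.sqrt t := by rw [hsq]
      _ ≤ Real.sqrt (DownAux.fsq (downshift m - H)) / Real.sqrt t :=
          (div_le_div_iff_of_pos_right (Real.sqrt_pos.2 htpos)).mpr
            (Real.sqrt_le_sqrt (by rw [ht] at *; linarith))
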